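/- Let R be a discrete valuation ring with maximal ideal P = Rp. Then the injective hull E(R/P) of R/P is not a pseudo-absorbing primary multiplication R-module. -/

import Mathlib

/-- A proper ideal `I` is 2-absorbing primary if `a*b*c ∈ I` implies
`a*b ∈ I` or `a*c ∈ √I` or `b*c ∈ √I`. -/
def IsTwoAbsPrimary {R : Type*} [CommRing R] (I : Ideal R) : Prop :=
  I ≠ ⊤ ∧ ∀ a b c : R, a * b * c ∈ I → a * b ∈ I ∨ a * c ∈ I.radical ∨ b * c ∈ I.radical

/-- A proper submodule `N` of `M` is pseudo-absorbing primary if `(N :_R M)`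
is a 2-absorbing primary ideal of `R`. -/
def IsPseudoAbsPrimary {R M : Type*} [CommRing R] [AddCommGroup M] [Module R M]
    (N : Submodule R M) : Prop :=
  N ≠ ⊤ ∧ IsTwoAbsPrimary (N.colon ⊤)

/-- `M` is a pseudo-absorbing primary multiplication module if every
pseudo-absorbing primary submodule `N` satisfies `N = I • M` for some ideal `I`. -/
def IsPAPMultiplication (R M : Type*) [CommRing R] [AddCommGroup M] [Module R M] : Prop :=
  ∀ N : Submodule R M, IsPseudoAbsPrimary N → ∃ I : Ideal R, N = I • (⊤ : Submodule R M)

universe u v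

-- step lemma: smallness of R/I^n
lemma aux_small_quot_pow {R : Type u} [CommRing R] [IsDomain R] (p : R) (hp : p ≠ 0)
    (hsmall : Small.{v} (R ⧸ Ideal.span {p})) :
    ∀ n : ℕ, Small.{v} (R ⧸ (Ideal.span {p} ^ n : Ideal R)) := by
  intro n
  induction n with
  | zero =>
      have : Subsingleton (R ⧸ (Ideal.span {p} ^ 0 : Ideal R)) := by
        rw [pow_zero]
        exact Ideal.Quotient.subsingleton_iff.mpr Ideal.one_eq_top
      exact small_of_injective (α := R ⧸ (Ideal.span {p} ^ 0 : Ideal R)) (β := PUnit)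
        (f := fun _ => PUnit.unit) (fun a b _ => Subsingleton.elim a b)
  | succ n ih =>
      set I : Ideal R := Ideal.span {p} with hI
      have hmem : ∀ (m : ℕ) (r : R), r ∈ (I ^ m : Ideal R) ↔ p ^ m ∣ r := by
        intro m r
        rw [hI, Ideal.span_singleton_pow, Ideal.mem_span_singleton]
      -- π : R⧸I^(n+1) →ₗ R⧸I^n
      have hle : (I ^ (n+1) : Ideal R) ≤ (I ^ n : Ideal R) := Ideal.pow_le_pow_right (by omega)
      let π : (R ⧸ (I ^ (n+1) : Ideal R)) →ₗ[R] (R ⧸ (I ^ n : Ideal R)) :=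
        Submodule.mapQ _ _ LinearMap.id hle
      have hπ : Function.Surjective π := by
        intro y
        obtain ⟨r, rfl⟩ := Submodule.Quotient.mk_surjective _ y
        exact ⟨Submodule.Quotient.mk r, rfl⟩
      -- g : R⧸I → R⧸I^(n+1),  mk c ↦ mk (c * p^n)
      let f : R →ₗ[R] (R ⧸ (I ^ (n+1) : Ideal R)) :=
        (Submodule.mkQ _) ∘ₗ (LinearMap.toSpanSingleton R R (p ^ n))
      have hf : I ≤ LinearMap.ker f := by
        intro r hr
        rw [hI, Ideal.mem_span_singleton] at hr
        obtain ⟨c, rfl⟩ := hr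
        simp only [f, LinearMap.mem_ker, LinearMap.comp_apply, LinearMap.toSpanSingleton_apply,
          Submodule.mkQ_apply, Submodule.Quotient.mk_eq_zero]
        rw [hmem]
        exact ⟨c, by rw [smul_eq_mul]; ring⟩
      let g : (R ⧸ (I : Ideal R)) →ₗ[R] (R ⧸ (I ^ (n+1) : Ideal R)) := Submodule.liftQ _ f hf
      have hg : Function.Injective g := by
        rw [← LinearMap.ker_eq_bot]
        rw [Submodule.ker_liftQ]
        rw [Submodule.eq_bot_iff]
        intro x hx
        obtain ⟨r, hr, rfl⟩ := Submodule.mem_map.mp hx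
        simp only [f, LinearMap.mem_ker, LinearMap.comp_apply, LinearMap.toSpanSingleton_apply,
          Submodule.mkQ_apply, Submodule.Quotient.mk_eq_zero] at hr
        rw [hmem] at hr
        obtain ⟨c, hc⟩ := hr
        rw [Submodule.mkQ_apply, Submodule.Quotient.mk_eq_zero]
        rw [show (I:Ideal R) = Ideal.span {p} from hI, Ideal.mem_span_singleton]
        refine ⟨c, ?_⟩
        have := hc
        rw [smul_eq_mul] at this
        have hpn : (p:R)^n ≠ 0 := pow_ne_zero _ hp
        -- r * p^n = p^(n+1) * c = (p*c) * p^n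
        have : r * p^n = (p*c) * p^n := by rw [this]; ring
        exact mul_right_cancel₀ hpn this
      -- kernel of π is contained in range of g
      have hker : ∀ x, π x = 0 → ∃ c, g c = x := by
        intro x hx
        obtain ⟨r, rfl⟩ := Submodule.Quotient.mk_surjective _ x
        have : π (Submodule.Quotient.mk r) = Submodule.Quotient.mk r := rfl
        rw [this, Submodule.Quotient.mk_eq_zero, hmem] at hx
        obtain ⟨c, rfl⟩ := hx
        refine ⟨Submodule.Quotient.mk c, ?_⟩
        show Submodule.Quotient.mk ((c : R) • p ^ n) = _
        rw [smul_eq_mul, mul_comm]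
      -- injection into product
      haveI : Small.{v} (R ⧸ (I ^ n : Ideal R)) := ih
      let σ : (R ⧸ (I ^ n : Ideal R)) → (R ⧸ (I ^ (n+1) : Ideal R)) := Function.surjInv hπ
      have hσ : ∀ y, π (σ y) = y := fun y => Function.surjInv_eq hπ y
      let F : (R ⧸ (I ^ (n+1) : Ideal R)) → (R ⧸ (I ^ n : Ideal R)) × (R ⧸ (I : Ideal R)) :=
        fun x => (π x, Function.invFun g (x - σ (π x)))
      have hF : Function.Injective F := by
        intro x y hxy
        have h1 : π x = π y := congrArg Prod.fst hxy
        have h2 : Function.invFun g (x - σ (π x)) = Function.invFun g (y - σ (π y)) :=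
          congrArg Prod.snd hxy
        obtain ⟨cx, hcx⟩ := hker (x - σ (π x)) (by rw [map_sub, hσ, sub_self])
        obtain ⟨cy, hcy⟩ := hker (y - σ (π y)) (by rw [map_sub, hσ, sub_self])
        rw [← hcx, ← hcy, Function.leftInverse_invFun hg, Function.leftInverse_invFun hg] at h2
        have : x - σ (π x) = y - σ (π y) := by rw [← hcx, ← hcy, h2]
        rw [h1] at this
        exact by
          have := congrArg (fun z => z + σ (π y)) this
          simpa using this
      exact small_of_injective hF


lemma aux_small_R {R : Type u} [CommRing R] [IsDomain R] [IsDiscreteValuationRing R]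
    (hsmall : Small.{v} (R ⧸ IsLocalRing.maximalIdeal R)) : Small.{v} R := by
  obtain ⟨p, hp⟩ := IsDiscreteValuationRing.exists_irreducible R
  have hP : IsLocalRing.maximalIdeal R = Ideal.span {p} :=
    (IsDiscreteValuationRing.irreducible_iff_uniformizer p).mp hp
  haveI : ∀ n : ℕ, Small.{v} (R ⧸ (Ideal.span {p} ^ n : Ideal R)) :=
    aux_small_quot_pow p hp.ne_zero (hP ▸ hsmall)
  have hbot : (⨅ n : ℕ, (Ideal.span {p} : Ideal R) ^ n) = ⊥ := by
    rw [← hP]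
    exact Ideal.iInf_pow_eq_bot_of_isLocalRing _
      (Ideal.IsMaximal.ne_top (IsLocalRing.maximalIdeal.isMaximal R))
  let F : R → ∀ n : ℕ, R ⧸ (Ideal.span {p} ^ n : Ideal R) := fun r n => Submodule.Quotient.mk r
  have hF : Function.Injective F := by
    intro r s h
    have hmem : r - s ∈ (⨅ n : ℕ, (Ideal.span {p} : Ideal R) ^ n) := by
      rw [Submodule.mem_iInf]
      intro n
      exact (Submodule.Quotient.eq _).mp (congrFun h n)
    rw [hbot] at hmem
    exact sub_eq_zero.mp (Submodule.mem_bot R |>.mp hmem)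
  exact small_of_injective hF


/-- For a DVR R with maximal ideal P, the injective hull E(R/P) of R/P (an
injective module containing R/P as an essential submodule) is not a
pseudo-absorbing primary multiplication module. -/
theorem stmt_6 {R E : Type*} [CommRing R] [IsDomain R] [IsDiscreteValuationRing R]
    [AddCommGroup E] [Module R E]
    (hinj : Module.Injective R E)
    (ι : (R ⧸ IsLocalRing.maximalIdeal R) →ₗ[R] E) (hι : Function.Injective ι)
    (hess : ∀ N : Submodule R E, N ≠ ⊥ → N ⊓ LinearMap.range ι ≠ ⊥) :
    ¬ IsPAPMultiplication R E := by
  intro hPAP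
  haveI := hinj
  haveI hsR : Small.{_} R := aux_small_R (small_of_injective hι)
  obtain ⟨p, hp⟩ := IsDiscreteValuationRing.exists_irreducible R
  have hP : IsLocalRing.maximalIdeal R = Ideal.span {p} :=
    (IsDiscreteValuationRing.irreducible_iff_uniformizer p).mp hp
  have hp0 : p ≠ 0 := hp.ne_zero
  -- divisibility
  have hdiv : ∀ a : R, a ≠ 0 → ∀ x : E, ∃ y : E, a • y = x := by
    intro a ha x
    have hfinj : Function.Injective (LinearMap.toSpanSingleton R R a) := by
      intro r s h
      simp only [LinearMap.toSpanSingleton_apply, smul_eq_mul] at h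
      exact mul_right_cancel₀ ha h
    obtain ⟨h, hh⟩ := Module.Injective.extension_property R E R R
      (LinearMap.toSpanSingleton R R a) hfinj (LinearMap.toSpanSingleton R E x)
    refine ⟨h 1, ?_⟩
    have := LinearMap.congr_fun hh 1
    simp only [LinearMap.comp_apply, LinearMap.toSpanSingleton_apply, one_smul] at this
    rw [← this, ← map_smul]
    congr 1
    rw [smul_eq_mul, mul_one]
  -- the element e₀
  set e₀ : E := ι (Submodule.Quotient.mk 1) with he₀def
  have he₀ : e₀ ≠ 0 := by
    intro h
    have : (Submodule.Quotient.mk (1:R) : R ⧸ IsLocalRing.maximalIdeal R) = 0 := by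
      apply hι; rw [← he₀def, h, map_zero]
    rw [Submodule.Quotient.mk_eq_zero] at this
    exact Ideal.IsMaximal.ne_top (IsLocalRing.maximalIdeal.isMaximal R)
      ((Ideal.eq_top_iff_one _).mpr this)
  have hpe₀ : p • e₀ = 0 := by
    rw [he₀def, ← map_smul, ← Submodule.Quotient.mk_smul]
    have : (Submodule.Quotient.mk (p • (1:R)) : R ⧸ IsLocalRing.maximalIdeal R) = 0 := by
      rw [Submodule.Quotient.mk_eq_zero, smul_eq_mul, mul_one, hP]
      exact Ideal.mem_span_singleton_self p
    rw [this, map_zero]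
  -- the submodule N
  set N : Submodule R E := LinearMap.ker (LinearMap.lsmul R E p) with hNdef
  have hmemN : ∀ x : E, x ∈ N ↔ p • x = 0 := fun x => Iff.rfl
  have hN_ne_bot : N ≠ ⊥ := by
    intro h
    have : e₀ ∈ N := (hmemN e₀).mpr hpe₀
    rw [h, Submodule.mem_bot] at this
    exact he₀ this
  have hN_ne_top : N ≠ ⊤ := by
    intro h
    obtain ⟨y, hy⟩ := hdiv p hp0 e₀
    have : y ∈ N := h ▸ Submodule.mem_top
    rw [hmemN] at this
    exact he₀ (hy ▸ this)
  have hcolon : N.colon ⊤ = ⊥ := by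
    apply le_antisymm
    · intro r hr
      rw [Submodule.mem_colon] at hr
      rw [Ideal.mem_bot]
      by_contra hr0
      have hpr : p * r ≠ 0 := mul_ne_zero hp0 hr0
      obtain ⟨y, hy⟩ := hdiv (p * r) hpr e₀
      have : r • y ∈ N := hr y (Submodule.mem_top (R := R))
      rw [hmemN, smul_smul] at this
      exact he₀ (hy ▸ this)
    · exact bot_le
  have htwo : IsTwoAbsPrimary (N.colon ⊤) := by
    rw [hcolon]
    constructor
    · intro h
      have : (1:R) ∈ (⊥ : Ideal R) := h ▸ Submodule.mem_top
      rw [Ideal.mem_bot] at this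
      exact one_ne_zero this
    · intro a b c habc
      rw [Ideal.mem_bot] at habc
      rcases mul_eq_zero.mp habc with h | h
      · left; rwa [Ideal.mem_bot]
      · right; left
        exact Ideal.le_radical (by rw [Ideal.mem_bot, h, mul_zero])
  obtain ⟨I, hI⟩ := hPAP N ⟨hN_ne_top, htwo⟩
  rcases eq_or_ne I ⊥ with h | h
  · rw [h, Submodule.bot_smul] at hI
    exact hN_ne_bot hI
  · obtain ⟨a, haI, ha0⟩ := Submodule.exists_mem_ne_zero_of_ne_bot h
    have : I • (⊤ : Submodule R E) = ⊤ := by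
      rw [eq_top_iff]
      intro x _
      obtain ⟨y, hy⟩ := hdiv a ha0 x
      exact hy ▸ Submodule.smul_mem_smul haI Submodule.mem_top
    rw [this] at hI
    exact hN_ne_top hI
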